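/- Let t ≥ 2 be an integer, let r ∈ {1,2} and s ∈ {−1,0,1} with t ≡ s (mod 2) and t − 2r + s ≥ 0, and define S_{r,s}(t) := Σ_{k=0}^{⌊(t−2r+s)/6⌋} C((t−2k−2+s)/2, 2k+r−1) · I(2(2k+r), (t−2k+s)/2). If t − 2r + s is not a multiple of 6, then S_{r,s}(t) = (1/2) Σ_{k=0}^{⌊(t−2r+s)/6⌋} C((t−2k−2+s)/2, 2k+r−1) Σ_{i=0}^{2k+r−1} C(2k+r−1, i) · ((−1)^i / ((t+s)/2 − 3k − r + i)) · (1 − 2^{−((t+s)/2 − 3k − r + i)}). If t − 2r + s is a multiple of 6, then S_{r,s}(t) = (1/2) [ ln 2 + Σ_{k=0}^{(t−2r+s)/6 − 1} C((t−2k−2+s)/2, 2k+r−1) Σ_{i=0}^{2k+r−1} C(2k+r−1, i) · ((−1)^i / ((t+s)/2 − 3k − r + i)) · (1 − 2^{−((t+s)/2 − 3k − r + i)}) + Σ_{i=1}^{(t+r+s)/3 − 1} C((t+r+s)/3 − 1, i) · ((−1)^i / i) · (1 − 2^{−i}) ]. -/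

import Mathlib

/-- `Ical a c = ∫_0^∞ e^{−ax}/(1+e^{−2x})^c dx`. -/
noncomputable def Ical (a c : ℕ) : ℝ :=
  ∫ x in Set.Ioi (0 : ℝ), Real.exp (-(a : ℝ) * x) / (1 + Real.exp (-2 * x)) ^ c

open MeasureTheory Real Filter Set in
private lemma SrsAux_exp_deriv (x : ℝ) :
    HasDerivAt (fun x : ℝ => Real.exp (-2 * x)) (-2 * Real.exp (-2 * x)) x := by
  have h1 : HasDerivAt (fun x : ℝ => -2 * x) (-2 : ℝ) x := by
    simpa using (hasDerivAt_id x).const_mul (-2 : ℝ)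
  simpa [mul_comm] using h1.exp

open MeasureTheory Real Filter Set in
private lemma SrsAux_exp_tendsto :
    Filter.Tendsto (fun x : ℝ => Real.exp (-2 * x)) Filter.atTop (nhds 0) := by
  apply Real.tendsto_exp_atBot.comp
  exact Filter.Tendsto.const_mul_atTop_of_neg (by norm_num) tendsto_id

open MeasureTheory Real Filter Set in
private lemma SrsAux_Jd_int (d : ℕ) (hd : 1 ≤ d) :
    IntegrableOn (fun x => Real.exp (-2*x) / (1 + Real.exp (-2*x)) ^ (d+1)) (Ioi (0:ℝ)) ∧
    (∫ x in Ioi (0:ℝ), Real.exp (-2*x) / (1 + Real.exp (-2*x)) ^ (d+1))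
      = 1/(2*d) * (1 - (2:ℝ) ^ (-(d:ℤ))) := by
  set F : ℝ → ℝ := fun x => (1/(2*(d:ℝ))) * ((1 + Real.exp (-2*x)) ^ d)⁻¹ with hF
  have hderiv : ∀ x ∈ Ici (0:ℝ),
      HasDerivAt F (Real.exp (-2*x) / (1 + Real.exp (-2*x)) ^ (d+1)) x := by
    intro x _
    have h2 : HasDerivAt (fun x : ℝ => 1 + Real.exp (-2 * x)) (-2 * Real.exp (-2 * x)) x :=
      (SrsAux_exp_deriv x).const_add 1
    have h3 := ((h2.pow d).inv (by simp only [Pi.pow_apply]; positivity)).const_mul (1/(2*(d:ℝ)))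
    refine h3.congr_deriv ?_
    have hgx : (0:ℝ) < 1 + Real.exp (-2*x) := by positivity
    have hd2 : d - 1 + (d + 1) = d * 2 := by omega
    simp only [Pi.pow_apply]
    field_simp
    rw [← pow_mul, ← hd2, pow_add]
    ring
  have htend : Tendsto F atTop (nhds (1/(2*(d:ℝ)))) := by
    have := (((SrsAux_exp_tendsto.const_add 1).pow d).inv₀ (by norm_num)).const_mul (1/(2*(d:ℝ)))
    rw [hF]
    simpa using this
  have hnonneg : ∀ x ∈ Ioi (0:ℝ), 0 ≤ Real.exp (-2*x) / (1 + Real.exp (-2*x)) ^ (d+1) := by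
    intro x _; positivity
  have hint := integrableOn_Ioi_deriv_of_nonneg' hderiv hnonneg htend
  refine ⟨hint, ?_⟩
  rw [integral_Ioi_of_hasDerivAt_of_tendsto' hderiv hint htend]
  have : F 0 = 1/(2*(d:ℝ)) * ((2:ℝ)^d)⁻¹ := by simp [hF]; norm_num
  rw [this, zpow_neg, zpow_natCast]
  ring

open MeasureTheory Real Filter Set in
private lemma SrsAux_J0_int :
    IntegrableOn (fun x => Real.exp (-2*x) / (1 + Real.exp (-2*x)) ^ (0+1)) (Ioi (0:ℝ)) ∧
    (∫ x in Ioi (0:ℝ), Real.exp (-2*x) / (1 + Real.exp (-2*x)) ^ (0+1))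
      = (1/2) * Real.log 2 := by
  set F : ℝ → ℝ := fun x => -(1/2) * Real.log (1 + Real.exp (-2*x)) with hF
  have hderiv : ∀ x ∈ Ici (0:ℝ),
      HasDerivAt F (Real.exp (-2*x) / (1 + Real.exp (-2*x)) ^ (0+1)) x := by
    intro x _
    have hgx : (0:ℝ) < 1 + Real.exp (-2*x) := by positivity
    have h2 : HasDerivAt (fun x : ℝ => 1 + Real.exp (-2 * x)) (-2 * Real.exp (-2 * x)) x :=
      (SrsAux_exp_deriv x).const_add 1
    have h3 := (h2.log (ne_of_gt hgx)).const_mul (-(1/2) : ℝ)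
    refine h3.congr_deriv ?_
    field_simp
    ring
  have htend : Tendsto F atTop (nhds 0) := by
    have := ((SrsAux_exp_tendsto.const_add 1).log (by norm_num)).const_mul (-(1/2) : ℝ)
    rw [hF]
    simpa using this
  have hnonneg : ∀ x ∈ Ioi (0:ℝ), 0 ≤ Real.exp (-2*x) / (1 + Real.exp (-2*x)) ^ (0+1) := by
    intro x _; positivity
  have hint := integrableOn_Ioi_deriv_of_nonneg' hderiv hnonneg htend
  refine ⟨hint, ?_⟩
  rw [integral_Ioi_of_hasDerivAt_of_tendsto' hderiv hint htend]
  simp [hF]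
  norm_num

open MeasureTheory Real Filter Set in
/-- the basic integral `∫_0^∞ e^{-2x}/(1+e^{-2x})^{d+1} dx`. -/
noncomputable def Jint (d : ℕ) : ℝ :=
  ∫ x in Ioi (0:ℝ), Real.exp (-2*x) / (1 + Real.exp (-2*x)) ^ (d+1)

open MeasureTheory Real Filter Set in
private lemma Jint_integrable (d : ℕ) :
    IntegrableOn (fun x => Real.exp (-2*x) / (1 + Real.exp (-2*x)) ^ (d+1)) (Ioi (0:ℝ)) := by
  rcases Nat.eq_zero_or_pos d with h | h
  · subst h; exact SrsAux_J0_int.1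
  · exact (SrsAux_Jd_int d h).1

private lemma Jint_pos (d : ℕ) (hd : 1 ≤ d) :
    Jint d = 1/(2*d) * (1 - (2:ℝ) ^ (-(d:ℤ))) := (SrsAux_Jd_int d hd).2

private lemma Jint_zero : Jint 0 = (1/2) * Real.log 2 := SrsAux_J0_int.2

open MeasureTheory Real Filter Set in
private lemma SrsAux_pointwise (m c : ℕ) (hm : 1 ≤ m) (hmc : m ≤ c) (x : ℝ) :
    Real.exp (-(2*m : ℕ) * x) / (1 + Real.exp (-2*x)) ^ c
      = ∑ i ∈ Finset.range m, (Nat.choose (m-1) i : ℝ) * (-1)^i *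
          (Real.exp (-2*x) / (1 + Real.exp (-2*x)) ^ ((c-m+i)+1)) := by
  set y := Real.exp (-2*x) with hy
  have hy0 : 0 < y := Real.exp_pos _
  have hg : (0:ℝ) < 1 + y := by positivity
  have h1 : Real.exp (-(2*m : ℕ) * x) = y ^ m := by
    have h : (-(2*m : ℕ) : ℝ) * x = (m : ℕ) * (-2*x) := by push_cast; ring
    rw [h, Real.exp_nat_mul]
  have h2 : y ^ m = y * ((-1 : ℝ) + (1+y)) ^ (m-1) := by
    have h : (-1 : ℝ) + (1+y) = y := by ring
    rw [h, ← pow_succ']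
    congr 1; omega
  have h3 : ((-1 : ℝ) + (1+y)) ^ (m-1)
      = ∑ i ∈ Finset.range m, (-1:ℝ)^i * (1+y)^(m-1-i) * (Nat.choose (m-1) i) := by
    rw [add_pow]
    have : m - 1 + 1 = m := by omega
    rw [this]
  rw [h1, h2, h3, Finset.mul_sum, Finset.sum_div]
  apply Finset.sum_congr rfl
  intro i hi
  rw [Finset.mem_range] at hi
  have hsplit : (1+y)^c = (1+y)^(m-1-i) * (1+y)^((c-m+i)+1) := by
    rw [← pow_add]; congr 1; omega
  rw [hsplit]
  have h4 : (1+y)^(m-1-i) ≠ 0 := by positivity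
  have h5 : (1+y)^((c-m+i)+1) ≠ 0 := by positivity
  field_simp

open MeasureTheory Real Filter Set in
private lemma Ical_eq (m c : ℕ) (hm : 1 ≤ m) (hmc : m ≤ c) :
    Ical (2*m) c = ∑ i ∈ Finset.range m,
      (Nat.choose (m-1) i : ℝ) * (-1)^i * Jint (c-m+i) := by
  unfold Ical Jint
  rw [setIntegral_congr_fun measurableSet_Ioi
    (fun x _ => SrsAux_pointwise m c hm hmc x)]
  rw [integral_finset_sum]
  · apply Finset.sum_congr rfl
    intro i _
    rw [MeasureTheory.integral_const_mul]
  · intro i _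
    exact ((Jint_integrable (c-m+i)).const_mul _)

/-- `S_{r,s}(t) = Σ_{k=0}^{⌊(t−2r+s)/6⌋} C((t−2k−2+s)/2, 2k+r−1) · I(2(2k+r), (t−2k+s)/2)`. -/
noncomputable def Srs (r : ℕ) (s : ℤ) (t : ℕ) : ℝ :=
  ∑ k ∈ Finset.range (((((t : ℤ) - 2 * r + s) / 6) + 1).toNat),
    (Nat.choose ((((t : ℤ) - 2 * k - 2 + s) / 2).toNat) (2 * k + r - 1) : ℝ) *
      Ical (2 * (2 * k + r)) ((((t : ℤ) - 2 * k + s) / 2).toNat)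

/-- Evaluation of `S_{r,s}(t)` (Proposition 5.3). -/
theorem Srs_eval (t : ℕ) (ht : 2 ≤ t) (r : ℕ) (hr : r = 1 ∨ r = 2) (s : ℤ)
    (hs : s = -1 ∨ s = 0 ∨ s = 1) (hpar : (t : ℤ) ≡ s [ZMOD 2])
    (hnn : 0 ≤ (t : ℤ) - 2 * r + s) :
    (¬ (6 ∣ ((t : ℤ) - 2 * r + s)) →
      Srs r s t = (1 / 2) * ∑ k ∈ Finset.range (((((t : ℤ) - 2 * r + s) / 6) + 1).toNat),
        (Nat.choose ((((t : ℤ) - 2 * k - 2 + s) / 2).toNat) (2 * k + r - 1) : ℝ) *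
          ∑ i ∈ Finset.range (2 * k + r),
            (Nat.choose (2 * k + r - 1) i : ℝ) *
              ((-1) ^ i / ((((t : ℤ) + s) / 2 - 3 * k - r + i : ℤ) : ℝ)) *
              (1 - (2 : ℝ) ^ (-(((t : ℤ) + s) / 2 - 3 * k - r + i)))) ∧
    ((6 ∣ ((t : ℤ) - 2 * r + s)) →
      Srs r s t = (1 / 2) * (Real.log 2
        + (∑ k ∈ Finset.range ((((t : ℤ) - 2 * r + s) / 6).toNat),
            (Nat.choose ((((t : ℤ) - 2 * k - 2 + s) / 2).toNat) (2 * k + r - 1) : ℝ) *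
              ∑ i ∈ Finset.range (2 * k + r),
                (Nat.choose (2 * k + r - 1) i : ℝ) *
                  ((-1) ^ i / ((((t : ℤ) + s) / 2 - 3 * k - r + i : ℤ) : ℝ)) *
                  (1 - (2 : ℝ) ^ (-(((t : ℤ) + s) / 2 - 3 * k - r + i))))
        + ∑ i ∈ Finset.Icc 1 ((((t : ℤ) + r + s) / 3 - 1).toNat),
            (Nat.choose ((((t : ℤ) + r + s) / 3 - 1).toNat) i : ℝ) *
              ((-1) ^ i / (i : ℝ)) * (1 - (2 : ℝ) ^ (-(i : ℤ))))) := by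
  have hr1 : 1 ≤ r := by rcases hr with h|h <;> omega
  have hr2 : r ≤ 2 := by rcases hr with h|h <;> omega
  have hs1 : -1 ≤ s := by rcases hs with h|h|h <;> omega
  have hs2 : s ≤ 1 := by rcases hs with h|h|h <;> omega
  have hd2 : (2:ℤ) ∣ s - t := hpar.dvd
  obtain ⟨u, hu⟩ : ∃ u : ℕ, (t:ℤ) + s = 2*u := ⟨(((t:ℤ)+s)/2).toNat, by omega⟩
  set q : ℕ := (((t:ℤ) - 2*r + s)/6).toNat with hqdef
  have hq : (q:ℤ) = ((t:ℤ) - 2*r + s)/6 := by omega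
  have hq6 : 6*(q:ℤ) ≤ 2*(u:ℤ) - 2*r ∧ 2*(u:ℤ) - 2*r < 6*q + 6 := by omega
  have hur : r ≤ u := by omega
  have hrange : ((((t : ℤ) - 2 * r + s) / 6) + 1).toNat = q + 1 := by omega
  have hSrs : Srs r s t = ∑ k ∈ Finset.range (q+1),
      (Nat.choose (u-k-1) (2*k+r-1) : ℝ) * Ical (2*(2*k+r)) (u-k) := by
    unfold Srs
    rw [hrange]
    apply Finset.sum_congr rfl
    intro k hk
    rw [Finset.mem_range] at hk
    have h1 : (((t:ℤ) - 2*k - 2 + s)/2).toNat = u - k - 1 := by omega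
    have h2 : (((t:ℤ) - 2*k + s)/2).toNat = u - k := by omega
    rw [h1, h2]
  have hterm : ∀ k, k ≤ q → Ical (2*(2*k+r)) (u-k)
      = ∑ i ∈ Finset.range (2*k+r), (Nat.choose (2*k+r-1) i : ℝ) * (-1)^i *
          Jint (u - k - (2*k+r) + i) :=
    fun k hk => Ical_eq (2*k+r) (u-k) (by omega) (by omega)
  -- a generic per-term computation
  have hinner : ∀ k i : ℕ, 1 ≤ u - k - (2*k+r) + i →
      (((t:ℤ)+s)/2 - 3*k - r + i) = ((u - k - (2*k+r) + i : ℕ) : ℤ) →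
      (Nat.choose (2*k+r-1) i : ℝ) * (-1)^i * Jint (u - k - (2*k+r) + i)
        = 1/2 * ((Nat.choose (2*k+r-1) i : ℝ) *
            ((-1)^i / (((((t:ℤ)+s)/2 - 3*k - r + i : ℤ)) : ℝ)) *
            (1 - (2:ℝ) ^ (-(((t:ℤ)+s)/2 - 3*k - r + i)))) := by
    intro k i hd1 hz2
    rw [Jint_pos _ hd1, hz2]
    have hdne : ((u - k - (2*k+r) + i : ℕ):ℝ) ≠ 0 := Nat.cast_ne_zero.mpr (by omega)
    push_cast
    field_simp
  constructor
  · -- non-divisible case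
    intro hnd
    have hstrict : 6*(q:ℤ) + 1 ≤ 2*(u:ℤ) - 2*r := by omega
    rw [hSrs, hrange, Finset.mul_sum]
    apply Finset.sum_congr rfl
    intro k hk
    rw [Finset.mem_range] at hk
    have h1 : (((t:ℤ) - 2*k - 2 + s)/2).toNat = u - k - 1 := by omega
    rw [hterm k (by omega), h1, Finset.mul_sum, Finset.mul_sum, Finset.mul_sum]
    apply Finset.sum_congr rfl
    intro i hi
    rw [Finset.mem_range] at hi
    rw [hinner k i (by omega) (by omega)]
    ring
  · -- divisible case
    intro hdvd
    have huq : (u:ℤ) = 3*q + r := by omega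
    have hM : (((t:ℤ) + r + s)/3 - 1).toNat = 2*q + r - 1 := by omega
    rw [hSrs, Finset.sum_range_succ, hM]
    have hmid : ∑ k ∈ Finset.range q,
        (Nat.choose (u-k-1) (2*k+r-1) : ℝ) * Ical (2*(2*k+r)) (u-k)
        = 1/2 * ∑ k ∈ Finset.range q,
            (Nat.choose ((((t : ℤ) - 2 * k - 2 + s) / 2).toNat) (2 * k + r - 1) : ℝ) *
              ∑ i ∈ Finset.range (2 * k + r),
                (Nat.choose (2 * k + r - 1) i : ℝ) *
                  ((-1) ^ i / ((((t : ℤ) + s) / 2 - 3 * k - r + i : ℤ) : ℝ)) *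
                  (1 - (2 : ℝ) ^ (-(((t : ℤ) + s) / 2 - 3 * k - r + i))) := by
      rw [Finset.mul_sum]
      apply Finset.sum_congr rfl
      intro k hk
      rw [Finset.mem_range] at hk
      have h1 : (((t:ℤ) - 2*k - 2 + s)/2).toNat = u - k - 1 := by omega
      rw [hterm k (by omega), h1, Finset.mul_sum, Finset.mul_sum, Finset.mul_sum]
      apply Finset.sum_congr rfl
      intro i hi
      rw [Finset.mem_range] at hi
      rw [hinner k i (by omega) (by omega)]
      ring
    have hchoose : (Nat.choose (u-q-1) (2*q+r-1) : ℝ) = 1 := by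
      have : u - q - 1 = 2*q+r-1 := by omega
      rw [this, Nat.choose_self, Nat.cast_one]
    have hlastsum : Ical (2*(2*q+r)) (u-q)
        = 1/2 * Real.log 2
          + 1/2 * ∑ i ∈ Finset.Icc 1 (2*q + r - 1),
              (Nat.choose (2*q + r - 1) i : ℝ) *
                ((-1) ^ i / (i : ℝ)) * (1 - (2 : ℝ) ^ (-(i : ℤ))) := by
      rw [hterm q le_rfl]
      have hz : ∀ i : ℕ, u - q - (2*q+r) + i = i := by intro i; omega
      have hre : ∑ i ∈ Finset.range (2*q+r),
          (Nat.choose (2*q+r-1) i : ℝ) * (-1)^i * Jint (u - q - (2*q+r) + i)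
          = ∑ i ∈ Finset.range (2*q+r),
            (Nat.choose (2*q+r-1) i : ℝ) * (-1)^i * Jint i := by
        apply Finset.sum_congr rfl; intro i _; rw [hz i]
      rw [hre]
      have hn : 2*q+r = (2*q+r-1) + 1 := by omega
      rw [hn, Finset.sum_range_succ']
      simp only [Nat.add_sub_cancel]
      have h0 : (Nat.choose (2*q+r-1) 0 : ℝ) * (-1)^0 * Jint 0 = 1/2 * Real.log 2 := by
        simp [Jint_zero]
      rw [h0]
      have hicc : ∑ i ∈ Finset.Icc 1 (2*q + r - 1),
          (Nat.choose (2*q + r - 1) i : ℝ) * ((-1) ^ i / (i : ℝ)) * (1 - (2 : ℝ) ^ (-(i : ℤ)))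
          = ∑ j ∈ Finset.range (2*q + r - 1),
            (Nat.choose (2*q + r - 1) (1+j) : ℝ) * ((-1) ^ (1+j) / ((1+j : ℕ) : ℝ)) *
              (1 - (2 : ℝ) ^ (-((1+j : ℕ) : ℤ))) := by
        rw [← Finset.Ico_add_one_right_eq_Icc, Finset.sum_Ico_eq_sum_range]
        simp
      rw [hicc, Finset.mul_sum]
      have hsum : ∀ j ∈ Finset.range (2*q+r-1),
          (Nat.choose (2*q+r-1) (j+1) : ℝ) * (-1)^(j+1) * Jint (j+1)
          = 1/2 * ((Nat.choose (2*q + r - 1) (1+j) : ℝ) * ((-1) ^ (1+j) / ((1+j : ℕ) : ℝ)) *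
              (1 - (2 : ℝ) ^ (-((1+j : ℕ) : ℤ)))) := by
        intro j _
        rw [Jint_pos (j+1) (by omega)]
        have hne : ((j:ℝ) + 1) ≠ 0 := by positivity
        have h1j : (1 + j) = (j + 1) := by omega
        rw [h1j]
        push_cast
        field_simp
      rw [Finset.sum_congr rfl hsum]
      ring
    rw [hmid, hchoose, hlastsum]
    ring
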